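/- Let D be a noncommutative division ring and A an abelian maximal subgroup of the multiplicative group D^*. Then A is self-normalizing: the normalizer of A in D^* equals A. -/

import Mathlib

/-- A normal abelian subgroup of the units of a division ring is central (in `D`).
This is a Cartan–Brauer–Hua style argument. -/
theorem stmt_2_aux {D : Type*} [DivisionRing D]
    (A : Subgroup Dˣ) (hnorm : A.Normal)
    (habel : ∀ a ∈ A, ∀ b ∈ A, a * b = b * a) :
    ∀ a ∈ A, ∀ y : D, (a : D) * y = y * (a : D) := by
  -- S is the centralizer (in D) of A
  set S : Set D := {x : D | ∀ u : Dˣ, u ∈ A → x * (u : D) = (u : D) * x} with hSdef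
  have hS0 : (0 : D) ∈ S := by intro u hu; simp
  have hSsub : ∀ x ∈ S, ∀ y ∈ S, x - y ∈ S := by
    intro x hx y hy u hu
    have h1 := hx u hu; have h2 := hy u hu
    rw [sub_mul, mul_sub, h1, h2]
  have hSmul : ∀ x ∈ S, ∀ y ∈ S, x * y ∈ S := by
    intro x hx y hy u hu
    have h1 := hx u hu; have h2 := hy u hu
    rw [mul_assoc, h2, ← mul_assoc, h1, mul_assoc]
  have hSinv : ∀ x ∈ S, x⁻¹ ∈ S := by
    intro x hx u hu
    rcases eq_or_ne x 0 with rfl | hx0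
    · simpa using hS0 u hu
    · have h1 := hx u hu
      have : x⁻¹ * (x * (u : D)) * x⁻¹ = x⁻¹ * ((u : D) * x) * x⁻¹ := by rw [h1]
      rw [← mul_assoc, inv_mul_cancel₀ hx0, one_mul, mul_assoc, mul_assoc,
        mul_inv_cancel₀ hx0, mul_one] at this
      exact this.symm
  have hA_in_S : ∀ a ∈ A, (a : D) ∈ S := by
    intro a ha u hu
    have := habel a ha u hu
    exact_mod_cast congrArg (Units.val) this
  -- conjugation invariance of S
  have hconj : ∀ x ∈ S, ∀ d : Dˣ, (d : D) * x * (d : D)⁻¹ ∈ S := by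
    intro x hx d u hu
    have hd0 : (d : D) ≠ 0 := Units.ne_zero d
    have hu' : d⁻¹ * u * d⁻¹⁻¹ ∈ A := hnorm.conj_mem u hu d⁻¹
    have h1 := hx _ hu'
    have h1' : x * ((d : D)⁻¹ * (u : D) * (d : D)) = (d : D)⁻¹ * (u : D) * (d : D) * x := by
      simpa [Units.val_mul] using h1
    have h2 := congrArg (fun z => (d : D) * z * (d : D)⁻¹) h1'
    simp only [mul_assoc] at h2 ⊢
    simpa [mul_inv_cancel_left₀ hd0, inv_mul_cancel_left₀ hd0, mul_inv_cancel₀ hd0,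
      inv_mul_cancel₀ hd0, mul_assoc] using h2
  -- the key claim : anything outside S commutes with anything in S
  have hout : ∀ a ∈ S, ∀ x : D, x ∉ S → x * a = a * x := by
    intro a haS x hxS
    have hx0 : x ≠ 0 := fun h => hxS (h ▸ hS0)
    rcases eq_or_ne x (-1) with rfl | hxm1
    · simp
    · have hx1 : (1 : D) + x ≠ 0 := by
        intro h
        exact hxm1 (neg_eq_of_add_eq_zero_right h).symm
      set xu : Dˣ := Units.mk0 x hx0
      set yu : Dˣ := Units.mk0 (1 + x) hx1
      have hk : x * a * x⁻¹ ∈ S := by simpa [xu] using hconj a haS xu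
      have hk' : (1 + x) * a * (1 + x)⁻¹ ∈ S := by simpa [yu] using hconj a haS yu
      set k := x * a * x⁻¹ with hkdef
      set k' := (1 + x) * a * (1 + x)⁻¹ with hk'def
      have e1 : x * a = k * x := by
        rw [hkdef, mul_assoc, inv_mul_cancel₀ hx0, mul_one]
      have e2 : (1 + x) * a = k' * (1 + x) := by
        rw [hk'def, mul_assoc, inv_mul_cancel₀ hx1, mul_one]
      rw [add_mul, one_mul, mul_add, mul_one, e1] at e2
      -- e2 : a + k * x = k' + k' * x
      have e3 : a - k' = (k' - k) * x := by
        have ha : a = k' + k' * x - k * x := by rw [← e2]; abel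
        rw [ha, sub_mul]; abel
      rcases eq_or_ne k' k with hkk | hkk
      · rw [hkk, sub_self, zero_mul] at e3
        have ha : a = k := sub_eq_zero.mp e3
        rw [e1, ha]
      · exfalso
        apply hxS
        have hxk : x = (k' - k)⁻¹ * (a - k') := by
          rw [e3, ← mul_assoc, inv_mul_cancel₀ (sub_ne_zero.mpr hkk), one_mul]
        rw [hxk]
        exact hSmul _ (hSinv _ (hSsub _ hk' _ hk)) _ (hSsub _ haS _ hk')
  intro a ha y
  by_cases hy : y ∈ S
  · exact (hy a ha).symm
  · exact (hout (a : D) (hA_in_S a ha) y hy).symm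

/-- An abelian maximal subgroup `A` of `Dˣ` (`D` a noncommutative division
ring) is self-normalizing. -/
theorem stmt_2 {D : Type*} [DivisionRing D]
    (hD : ∃ a b : D, a * b ≠ b * a)
    (A : Subgroup Dˣ) (hmax : IsCoatom A)
    (habel : ∀ a ∈ A, ∀ b ∈ A, a * b = b * a) :
    Subgroup.normalizer (A : Set Dˣ) = A := by
  by_contra hne
  have htop : Subgroup.normalizer (A : Set Dˣ) = ⊤ :=
    hmax.2 _ (lt_of_le_of_ne A.le_normalizer (Ne.symm hne))
  have hnorm : A.Normal := Subgroup.normalizer_eq_top_iff.mp htop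
  -- units don't all commute
  have hunits : ¬ ∀ a b : Dˣ, a * b = b * a := by
    intro h
    obtain ⟨a, b, hab⟩ := hD
    rcases eq_or_ne a 0 with rfl | ha0; · simp at hab
    rcases eq_or_ne b 0 with rfl | hb0; · simp at hab
    have := h (Units.mk0 a ha0) (Units.mk0 b hb0)
    exact hab (by simpa using congrArg Units.val this)
  -- A is central
  have hA_central : A ≤ Subgroup.center Dˣ := by
    intro a ha
    rw [Subgroup.mem_center_iff]
    intro g
    have := stmt_2_aux A hnorm habel a ha (g : D)
    exact Units.ext (by exact_mod_cast this.symm)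
  -- center ≠ ⊤
  have hcenter_ne_top : Subgroup.center Dˣ ≠ ⊤ := by
    intro h
    apply hunits
    intro a b
    have hb : b ∈ Subgroup.center Dˣ := h ▸ Subgroup.mem_top b
    exact ((Subgroup.mem_center_iff.mp hb) a)
  -- the quotient Dˣ ⧸ A is cyclic
  have hcyc : IsCyclic (Dˣ ⧸ A) := by
    obtain ⟨g, -, hg⟩ := SetLike.exists_of_lt (lt_top_iff_ne_top.mpr hmax.1 : A < ⊤)
    have hx1 : (QuotientGroup.mk g : Dˣ ⧸ A) ≠ 1 :=
      fun h => hg ((QuotientGroup.eq_one_iff g).mp h)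
    set x : Dˣ ⧸ A := QuotientGroup.mk g
    refine ⟨x, fun y => ?_⟩
    have hcomap : A ≤ (Subgroup.zpowers x).comap (QuotientGroup.mk' A) := by
      intro g' hg'
      have h1 : QuotientGroup.mk' A g' = 1 := (QuotientGroup.eq_one_iff g').mpr hg'
      rw [Subgroup.mem_comap, h1]
      exact Subgroup.one_mem _
    have hcomap_top : (Subgroup.zpowers x).comap (QuotientGroup.mk' A) = ⊤ := by
      rcases eq_or_lt_of_le hcomap with h | h
      · exfalso
        have hgA : g ∈ A := by
          rw [h]
          exact Subgroup.mem_comap.mpr (Subgroup.mem_zpowers _)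
        exact hx1 ((QuotientGroup.eq_one_iff g).mpr hgA)
      · exact hmax.2 _ h
    obtain ⟨g', rfl⟩ := QuotientGroup.mk'_surjective A y
    have hmem : g' ∈ (Subgroup.zpowers x).comap (QuotientGroup.mk' A) :=
      hcomap_top ▸ Subgroup.mem_top g'
    exact Subgroup.mem_comap.mp hmem
  -- G/Z cyclic ⇒ abelian, contradiction
  apply hunits
  exact commutative_of_cyclic_center_quotient (QuotientGroup.mk' A)
    (by rw [QuotientGroup.ker_mk']; exact hA_central)
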